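/- For an incomplete matching π of [n] and any admissible linear order φ on its pairings, the total crossing number Cr(π) := Σ_{V∈p(π)} Cr_φ(V) is independent of the choice of φ, where for V={i,j} (i<j), Cr_φ(V) := (j−i−1) − |{U={k,l}∈p(π): k<i<l<j, U<_φ V}| − |{U={k,l}∈p(π): i<k<j<l, U<_φ V}|. Explicitly, Cr(π) = Σ_{{i,j}∈p(π)} |{{k}∈s(π): i<k<j}| + 2·|{(U,V): U,V∈p(π), V<U nested}| + |{({i,j},{k,l}) pairings: i<k<j<l}|. -/

import Mathlib

open scoped Classical

noncomputable def lo (V : Finset ℕ) : ℕ := WithTop.untopD 0 V.min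
noncomputable def hi (V : Finset ℕ) : ℕ := WithBot.unbotD 0 V.max

/-- `π` is an incomplete matching of `[n] = {1,…,n}`. -/
def IsIM (n : ℕ) (π : Finset (Finset ℕ)) : Prop :=
  (∀ B ∈ π, B.card = 1 ∨ B.card = 2) ∧
  (∀ B ∈ π, ∀ C ∈ π, B ≠ C → Disjoint B C) ∧
  π.biUnion id = Finset.Icc 1 n

/-- The pair blocks of `π`. -/
noncomputable def pairsOf (π : Finset (Finset ℕ)) : Finset (Finset ℕ) :=
  π.filter (fun B => B.card = 2)

/-- The elements of `[n]` lying in a singleton block of `π`. -/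
noncomputable def singsOf (π : Finset (Finset ℕ)) : Finset ℕ :=
  (π.filter (fun B => B.card = 1)).biUnion id

lemma lo_mem {V : Finset ℕ} (h : V.Nonempty) : lo V ∈ V := by
  unfold lo
  obtain ⟨a, ha⟩ := Finset.min_of_nonempty h
  rw [ha]; exact Finset.mem_of_min ha

lemma hi_mem {V : Finset ℕ} (h : V.Nonempty) : hi V ∈ V := by
  unfold hi
  obtain ⟨a, ha⟩ := Finset.max_of_nonempty h
  rw [ha]; exact Finset.mem_of_max ha

lemma lo_le {V : Finset ℕ} {x : ℕ} (hx : x ∈ V) : lo V ≤ x := by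
  unfold lo
  obtain ⟨a, ha⟩ := Finset.min_of_mem hx
  rw [ha]; exact Finset.min_le_of_eq hx ha

lemma le_hi {V : Finset ℕ} {x : ℕ} (hx : x ∈ V) : x ≤ hi V := by
  unfold hi
  obtain ⟨a, ha⟩ := Finset.max_of_mem hx
  rw [ha]; exact Finset.le_max_of_eq hx ha

lemma lo_lt_hi {V : Finset ℕ} (h : V.card = 2) : lo V < hi V := by
  have hne : V.Nonempty := Finset.card_pos.mp (by omega)
  have h1 := lo_mem hne; have h2 := hi_mem hne
  have hle : lo V ≤ hi V := le_hi h1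
  rcases hle.lt_or_eq with h' | h'
  · exact h'
  · exfalso
    have : V ⊆ {lo V} := fun x hx =>
      Finset.mem_singleton.mpr (le_antisymm (h' ▸ le_hi hx) (lo_le hx))
    have := Finset.card_le_card this
    rw [h] at this
    have := Finset.card_singleton (lo V)
    omega

lemma pair_eq {V : Finset ℕ} (h : V.card = 2) : V = {lo V, hi V} := by
  have hne : V.Nonempty := Finset.card_pos.mp (by omega)
  have hlt := lo_lt_hi h
  refine (Finset.eq_of_subset_of_card_le ?_ ?_).symm
  · intro x hx; simp at hx; rcases hx with rfl | rfl
    exacts [lo_mem hne, hi_mem hne]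
  · rw [h, Finset.card_insert_of_notMem (by simp; omega), Finset.card_singleton]

lemma pair_inter_card {a b : ℕ} (hab : a ≠ b) (s : Finset ℕ) :
    (({a, b} : Finset ℕ) ∩ s).card
      = (if a ∈ s then 1 else 0) + (if b ∈ s then 1 else 0) := by
  have : ({a, b} : Finset ℕ) ∩ s = ({a} ∩ s) ∪ ({b} ∩ s) := by
    ext x; simp [Finset.mem_inter, or_and_right]
  rw [this, Finset.card_union_of_disjoint]
  · congr 1 <;> split_ifs with h <;>
      simp [Finset.singleton_inter_of_mem, Finset.singleton_inter_of_notMem, h]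
  · exact Finset.disjoint_left.mpr (by intro x hx hy; simp_all)

lemma key (n : ℕ) (π : Finset (Finset ℕ)) (hπ : IsIM n π) (V : Finset ℕ)
    (hV : V ∈ pairsOf π) :
    hi V - lo V - 1 =
      ((singsOf π).filter (fun k => lo V < k ∧ k < hi V)).card
      + (((pairsOf π).filter (fun U => lo V < lo U ∧ hi U < hi V)).card
         + ((pairsOf π).filter (fun U => lo V < lo U ∧ lo U < hi V ∧ hi V < hi U)).card)
      + (((pairsOf π).filter (fun U => lo V < lo U ∧ hi U < hi V)).card
         + ((pairsOf π).filter (fun U => lo U < lo V ∧ lo V < hi U ∧ hi U < hi V)).card) := by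
  obtain ⟨hone, hdisj, huni⟩ := hπ
  have hVπ : V ∈ π := (Finset.mem_filter.mp hV).1
  have hV2 : V.card = 2 := (Finset.mem_filter.mp hV).2
  set i := lo V with hi_def
  set j := hi V with hj_def
  have hij : i < j := lo_lt_hi hV2
  have hVne : V.Nonempty := Finset.card_pos.mp (by omega)
  -- blocks are subsets of Icc 1 n
  have hblock : ∀ B ∈ π, ∀ x ∈ B, 1 ≤ x ∧ x ≤ n := by
    intro B hB x hx
    have : x ∈ π.biUnion id := Finset.mem_biUnion.mpr ⟨B, hB, hx⟩
    rw [huni] at this; exact Finset.mem_Icc.mp this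
  have hi1 : 1 ≤ i := (hblock V hVπ i (lo_mem hVne)).1
  have hjn : j ≤ n := (hblock V hVπ j (hi_mem hVne)).2
  -- decompose Ioo i j over blocks
  have hIoo : Finset.Ioo i j = π.biUnion (fun B => B ∩ Finset.Ioo i j) := by
    ext x
    simp only [Finset.mem_biUnion, Finset.mem_inter]
    constructor
    · intro hx
      have hx' : x ∈ π.biUnion id := by
        rw [huni]; exact Finset.mem_Icc.mpr ⟨by have := Finset.mem_Ioo.mp hx; omega,
          by have := Finset.mem_Ioo.mp hx; omega⟩
      obtain ⟨B, hB, hxB⟩ := Finset.mem_biUnion.mp hx'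
      exact ⟨B, hB, hxB, hx⟩
    · rintro ⟨B, _, _, hx⟩; exact hx
  have hcard : (Finset.Ioo i j).card = ∑ B ∈ π, (B ∩ Finset.Ioo i j).card := by
    conv_lhs => rw [hIoo]
    exact Finset.card_biUnion (fun B hB C hC hne =>
      Finset.disjoint_left.mpr (fun x hx hy =>
        Finset.disjoint_left.mp (hdisj B hB C hC hne)
          (Finset.mem_inter.mp hx).1 (Finset.mem_inter.mp hy).1))
  -- split into singletons and pairs
  have hsplit : ∑ B ∈ π, (B ∩ Finset.Ioo i j).card
      = ∑ B ∈ π.filter (fun B => B.card = 1), (B ∩ Finset.Ioo i j).card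
        + ∑ B ∈ pairsOf π, (B ∩ Finset.Ioo i j).card := by
    rw [add_comm]
    rw [← Finset.sum_filter_add_sum_filter_not π (fun B => B.card = 2)]
    congr 1
    apply Finset.sum_congr _ (fun _ _ => rfl)
    apply Finset.filter_congr
    intro B hB
    rcases hone B hB with h | h <;> simp [h]
  -- singletons
  have hsing : ∑ B ∈ π.filter (fun B => B.card = 1), (B ∩ Finset.Ioo i j).card
      = ((singsOf π).filter (fun k => i < k ∧ k < j)).card := by
    unfold singsOf
    rw [Finset.filter_biUnion]
    rw [Finset.card_biUnion]
    · apply Finset.sum_congr rfl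
      intro B hB
      congr 1
      ext x
      simp [Finset.mem_inter, Finset.mem_Ioo, and_comm]
    · intro B hB C hC hne
      exact Finset.disjoint_filter_filter
        (hdisj B (Finset.mem_filter.mp hB).1 C (Finset.mem_filter.mp hC).1 hne)
  -- pairs
  have hpair : ∑ B ∈ pairsOf π, (B ∩ Finset.Ioo i j).card
      = ((pairsOf π).filter (fun B => lo B ∈ Finset.Ioo i j)).card
        + ((pairsOf π).filter (fun B => hi B ∈ Finset.Ioo i j)).card := by
    rw [Finset.card_filter, Finset.card_filter, ← Finset.sum_add_distrib]
    apply Finset.sum_congr rfl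
    intro B hB
    have hB2 : B.card = 2 := (Finset.mem_filter.mp hB).2
    have hlt := lo_lt_hi hB2
    conv_lhs => rw [pair_eq hB2]
    exact pair_inter_card hlt.ne _
  -- disjointness facts for distinct pair blocks
  have hfacts : ∀ B ∈ pairsOf π, B ≠ V →
      lo B ≠ i ∧ lo B ≠ j ∧ hi B ≠ i ∧ hi B ≠ j := by
    intro B hB hne
    have hB2 : B.card = 2 := (Finset.mem_filter.mp hB).2
    have hBne : B.Nonempty := Finset.card_pos.mp (by omega)
    have hd := hdisj B (Finset.mem_filter.mp hB).1 V hVπ hne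
    have h1 : lo B ∉ V := Finset.disjoint_left.mp hd (lo_mem hBne)
    have h2 : hi B ∉ V := Finset.disjoint_left.mp hd (hi_mem hBne)
    have hiV : i ∈ V := lo_mem hVne
    have hjV : j ∈ V := hi_mem hVne
    exact ⟨fun h => h1 (h ▸ hiV), fun h => h1 (h ▸ hjV),
      fun h => h2 (h ▸ hiV), fun h => h2 (h ▸ hjV)⟩
  -- lo B ∈ Ioo i j  ↔  nested or right-crossing
  have hlocard : ((pairsOf π).filter (fun B => lo B ∈ Finset.Ioo i j)).card
      = ((pairsOf π).filter (fun U => i < lo U ∧ hi U < j)).card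
        + ((pairsOf π).filter (fun U => i < lo U ∧ lo U < j ∧ j < hi U)).card := by
    rw [← Finset.card_union_of_disjoint (Finset.disjoint_left.mpr (fun B h1 h2 => by
        have a1 := (Finset.mem_filter.mp h1).2
        have a2 := (Finset.mem_filter.mp h2).2
        omega)),
      ← Finset.filter_or]
    apply congr_arg Finset.card
    apply Finset.filter_congr
    intro B hB
    have hB2 : B.card = 2 := (Finset.mem_filter.mp hB).2
    have hlt := lo_lt_hi hB2
    simp only [Finset.mem_Ioo]
    by_cases hne : B = V
    · subst hne; constructor <;> (intro h; omega)
    · obtain ⟨f1, f2, f3, f4⟩ := hfacts B hB hne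
      constructor <;> (intro h; omega)
  -- hi B ∈ Ioo i j  ↔  nested or left-crossing
  have hhicard : ((pairsOf π).filter (fun B => hi B ∈ Finset.Ioo i j)).card
      = ((pairsOf π).filter (fun U => i < lo U ∧ hi U < j)).card
        + ((pairsOf π).filter (fun U => lo U < i ∧ i < hi U ∧ hi U < j)).card := by
    rw [← Finset.card_union_of_disjoint (Finset.disjoint_left.mpr (fun B h1 h2 => by
        have a1 := (Finset.mem_filter.mp h1).2
        have a2 := (Finset.mem_filter.mp h2).2
        omega)),
      ← Finset.filter_or]
    apply congr_arg Finset.card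
    apply Finset.filter_congr
    intro B hB
    have hB2 : B.card = 2 := (Finset.mem_filter.mp hB).2
    have hlt := lo_lt_hi hB2
    simp only [Finset.mem_Ioo]
    by_cases hne : B = V
    · subst hne; constructor <;> (intro h; omega)
    · obtain ⟨f1, f2, f3, f4⟩ := hfacts B hB hne
      constructor <;> (intro h; omega)
  have := Nat.card_Ioo i j
  omega

lemma card_filter_sum {α : Type*} (s : Finset α) (p : α → Prop) [DecidablePred p] :
    (s.filter p).card = ∑ a ∈ s, if p a then 1 else 0 := by
  rw [Finset.sum_ite, Finset.sum_const_zero, add_zero, Finset.sum_const,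
    smul_eq_mul, mul_one]

/-- For any admissible linear order `r` on the pairings of an incomplete matching `π`
(a strict linear order extending the nested order), the total crossing number
`Cr(π) = Σ_V Cr_r(V)` (with
`Cr_r(V) = (j−i−1) − |{U={k,l} : k<i<l<j, U <_r V}| − |{U={k,l} : i<k<j<l, U <_r V}|`
for `V = {i,j}`, `i<j`) is independent of `r`: it always equals
`Σ_{{i,j}∈p(π)} |{singletons k : i<k<j}| + 2·|{(U,V) : V<U nested}|
 + |{({i,j},{k,l}) : i<k<j<l}|`. -/
theorem crossing_number_independent (n : ℕ) (π : Finset (Finset ℕ)) (hπ : IsIM n π)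
    (r : Finset ℕ → Finset ℕ → Prop)
    (hasym : ∀ V ∈ pairsOf π, ∀ U ∈ pairsOf π, r V U → ¬ r U V)
    (htot : ∀ V ∈ pairsOf π, ∀ U ∈ pairsOf π, V ≠ U → r V U ∨ r U V)
    (htrans : ∀ V ∈ pairsOf π, ∀ U ∈ pairsOf π, ∀ Z ∈ pairsOf π,
      r V U → r U Z → r V Z)
    (hext : ∀ V ∈ pairsOf π, ∀ U ∈ pairsOf π, lo V < lo U → hi U < hi V → r V U) :
    (∑ V ∈ pairsOf π,
        ((hi V - lo V - 1) -
          (((pairsOf π).filter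
              (fun U => lo U < lo V ∧ lo V < hi U ∧ hi U < hi V ∧ r U V)).card +
            ((pairsOf π).filter
              (fun U => lo V < lo U ∧ lo U < hi V ∧ hi V < hi U ∧ r U V)).card)))
      =
      (∑ V ∈ pairsOf π, ((singsOf π).filter (fun k => lo V < k ∧ k < hi V)).card)
        + 2 * (((pairsOf π) ×ˢ (pairsOf π)).filter
            (fun q => lo q.2 < lo q.1 ∧ hi q.1 < hi q.2)).card
        + (((pairsOf π) ×ˢ (pairsOf π)).filter
            (fun q => lo q.1 < lo q.2 ∧ lo q.2 < hi q.1 ∧ hi q.1 < hi q.2)).card := by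
  classical
  set P := pairsOf π with hP
  -- pointwise rewriting of the summand
  have hterm : ∀ V ∈ P,
      ((hi V - lo V - 1) -
          ((P.filter (fun U => lo U < lo V ∧ lo V < hi U ∧ hi U < hi V ∧ r U V)).card +
            (P.filter (fun U => lo V < lo U ∧ lo U < hi V ∧ hi V < hi U ∧ r U V)).card))
        = ((singsOf π).filter (fun k => lo V < k ∧ k < hi V)).card
          + 2 * (P.filter (fun U => lo V < lo U ∧ hi U < hi V)).card
          + ((P.filter (fun U => (lo U < lo V ∧ lo V < hi U ∧ hi U < hi V) ∧ ¬ r U V)).card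
          + (P.filter (fun U => (lo V < lo U ∧ lo U < hi V ∧ hi V < hi U) ∧ ¬ r U V)).card) := by
    intro V hV
    have hkey := key n π hπ V hV
    rw [← hP] at hkey
    have e1 : (P.filter (fun U => (lo U < lo V ∧ lo V < hi U ∧ hi U < hi V) ∧ r U V)).card
        + (P.filter (fun U => (lo U < lo V ∧ lo V < hi U ∧ hi U < hi V) ∧ ¬ r U V)).card
        = (P.filter (fun U => lo U < lo V ∧ lo V < hi U ∧ hi U < hi V)).card := by
      have base := Finset.card_filter_add_card_filter_not
        (s := P.filter (fun U => lo U < lo V ∧ lo V < hi U ∧ hi U < hi V))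
        (p := fun U => r U V)
      rwa [Finset.filter_filter, Finset.filter_filter] at base
    have e2 : (P.filter (fun U => (lo V < lo U ∧ lo U < hi V ∧ hi V < hi U) ∧ r U V)).card
        + (P.filter (fun U => (lo V < lo U ∧ lo U < hi V ∧ hi V < hi U) ∧ ¬ r U V)).card
        = (P.filter (fun U => lo V < lo U ∧ lo U < hi V ∧ hi V < hi U)).card := by
      have base := Finset.card_filter_add_card_filter_not
        (s := P.filter (fun U => lo V < lo U ∧ lo U < hi V ∧ hi V < hi U))
        (p := fun U => r U V)
      rwa [Finset.filter_filter, Finset.filter_filter] at base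
    have a1 : P.filter (fun U => lo U < lo V ∧ lo V < hi U ∧ hi U < hi V ∧ r U V)
        = P.filter (fun U => (lo U < lo V ∧ lo V < hi U ∧ hi U < hi V) ∧ r U V) :=
      Finset.filter_congr (fun U _ => by tauto)
    have a2 : P.filter (fun U => lo V < lo U ∧ lo U < hi V ∧ hi V < hi U ∧ r U V)
        = P.filter (fun U => (lo V < lo U ∧ lo U < hi V ∧ hi V < hi U) ∧ r U V) :=
      Finset.filter_congr (fun U _ => by tauto)
    rw [a1, a2]
    omega
  rw [Finset.sum_congr rfl hterm]
  rw [Finset.sum_add_distrib, Finset.sum_add_distrib, ← Finset.mul_sum]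
  -- nested count
  have hnest : ∑ V ∈ P, (P.filter (fun U => lo V < lo U ∧ hi U < hi V)).card
      = ((P ×ˢ P).filter (fun q => lo q.2 < lo q.1 ∧ hi q.1 < hi q.2)).card := by
    simp only [card_filter_sum]
    rw [Finset.sum_product]
    exact (Finset.sum_comm).symm
  -- crossing counts
  have hcross : (∑ V ∈ P,
        ((P.filter (fun U => (lo U < lo V ∧ lo V < hi U ∧ hi U < hi V) ∧ ¬ r U V)).card
        + (P.filter (fun U => (lo V < lo U ∧ lo U < hi V ∧ hi V < hi U) ∧ ¬ r U V)).card))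
      = ((P ×ˢ P).filter
          (fun q => lo q.1 < lo q.2 ∧ lo q.2 < hi q.1 ∧ hi q.1 < hi q.2)).card := by
    simp only [card_filter_sum]
    rw [Finset.sum_product, Finset.sum_add_distrib]
    have swap : (∑ V ∈ P, ∑ U ∈ P,
          if (lo V < lo U ∧ lo U < hi V ∧ hi V < hi U) ∧ ¬ r U V then 1 else 0)
        = ∑ V ∈ P, ∑ U ∈ P,
          if (lo U < lo V ∧ lo V < hi U ∧ hi U < hi V) ∧ ¬ r V U then 1 else 0 :=
      Finset.sum_comm
    rw [swap, ← Finset.sum_add_distrib]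
    rw [show (∑ x ∈ P, ∑ y ∈ P, if lo x < lo y ∧ lo y < hi x ∧ hi x < hi y then 1 else 0)
        = ∑ V ∈ P, ∑ U ∈ P, if lo U < lo V ∧ lo V < hi U ∧ hi U < hi V then 1 else 0 from
      Finset.sum_comm]
    apply Finset.sum_congr rfl
    intro V hV
    rw [← Finset.sum_add_distrib]
    apply Finset.sum_congr rfl
    intro U hU
    by_cases hc : lo U < lo V ∧ lo V < hi U ∧ hi U < hi V
    · have hne : U ≠ V := fun h => by rw [h] at hc; omega
      rcases htot U hU V hV hne with h1 | h1
      · have h2 := hasym U hU V hV h1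
        simp [hc, h1, h2]
      · have h2 := hasym V hV U hU h1
        simp [hc, h1, h2]
    · simp [hc]
  rw [hnest, hcross]
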